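/- With s defined by s_0 = 1, s_{2i} = (-1)^i s_i, s_{2i+1} = s_i, one has s_{2^(n+1)+n} = -s_n for every natural number n ≥ 1 with n < 2^n. -/
import Mathlib

lemma s_key (s : ℕ → ℤ) (h0 : s 0 = 1)
    (heven : ∀ i, 1 ≤ i → s (2 * i) = (-1) ^ i * s i)
    (hodd : ∀ i, s (2 * i + 1) = s i) :
    ∀ k, 1 ≤ k → ∀ n, n < 2 ^ k → s (2 ^ (k + 1) + n) = -s n := by
  intro k
  induction k with
  | zero => omega
  | succ k ih =>
    intro _ n hn
    rcases Nat.eq_zero_or_pos k with rfl | hk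
    · -- base case: k+1 = 1, n < 2
      have h1 : s 1 = 1 := by simpa [h0] using hodd 0
      have h2 : s 2 = -1 := by
        have := heven 1 le_rfl
        simp [h1] at this
        linarith
      interval_cases n
      · have := heven 2 (by norm_num)
        simp [h2] at this
        simpa [h0] using this
      · have h5 : s 5 = s 2 := hodd 2
        have h4 : (2:ℕ) ^ (0 + 1 + 1) + 1 = 5 := by norm_num
        rw [h4, h5, h2, h1]
    · -- inductive step
      rcases Nat.even_or_odd n with ⟨i, hi⟩ | ⟨i, hi⟩
      · subst hi
        have hi' : i < 2 ^ k := by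
          have : 2 ^ (k + 1) = 2 * 2 ^ k := by ring
          omega
        have hrw : 2 ^ (k + 1 + 1) + (i + i) = 2 * (2 ^ (k + 1) + i) := by ring
        have hpos : 1 ≤ 2 ^ (k + 1) + i := by have := Nat.one_le_two_pow (n := k + 1); omega
        have hparity : ((-1 : ℤ)) ^ (2 ^ (k + 1) + i) = (-1) ^ i := by
          rw [pow_add]
          have : Even (2 ^ (k + 1)) := by
            exact (Nat.even_pow).mpr ⟨even_two, by omega⟩
          rw [this.neg_one_pow, one_mul]
        have hih := ih hk i hi'
        rcases Nat.eq_zero_or_pos i with rfl | hipos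
        · rw [hrw, heven _ hpos, hparity, hih]
          simp [h0]
        · have hev := heven i hipos
          have : i + i = 2 * i := by ring
          rw [hrw, heven _ hpos, hparity, hih, this, hev]
          ring
      · subst hi
        have hi' : i < 2 ^ k := by
          have : 2 ^ (k + 1) = 2 * 2 ^ k := by ring
          omega
        have hrw : 2 ^ (k + 1 + 1) + (2 * i + 1) = 2 * (2 ^ (k + 1) + i) + 1 := by
          ring
        rw [hrw, hodd, ih hk i hi', ← hodd i]

/-- If `s 0 = 1`, `s (2i) = (-1)^i s i` for `i ≥ 1` and `s (2i+1) = s i`, then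
`s (2^(n+1) + n) = -s n` for every `n ≥ 1` with `n < 2^n`. -/
theorem s_two_pow_add (s : ℕ → ℤ) (h0 : s 0 = 1)
    (heven : ∀ i, 1 ≤ i → s (2 * i) = (-1) ^ i * s i)
    (hodd : ∀ i, s (2 * i + 1) = s i) (n : ℕ) (hn : 1 ≤ n) (h : n < 2 ^ n) :
    s (2 ^ (n + 1) + n) = -s n := by
  exact s_key s h0 heven hodd n hn n h
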